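/- Let G be a finite abelian group of order n. Every sequence of 2n - 1 elements of G has a zero-sum subsequence of length exactly n. -/
import Mathlib

open Finset

lemma extract_disjoint {ι : Type*} [DecidableEq ι] (p : Finset ι → Prop) (k : ℕ) (hk : 0 < k)
    (hp : ∀ s : Finset ι, 2 * k - 1 ≤ s.card → ∃ t ⊆ s, t.card = k ∧ p t) :
    ∀ (r : ℕ) (s : Finset ι), r * k + (k - 1) ≤ s.card →
      ∃ T : Fin r → Finset ι, (∀ j, T j ⊆ s) ∧ (∀ j, (T j).card = k ∧ p (T j)) ∧
        ∀ j j', j ≠ j' → Disjoint (T j) (T j') := by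
  intro r
  induction r with
  | zero => intro s _; exact ⟨fun j => j.elim0, fun j => j.elim0, fun j => j.elim0,
      fun j => j.elim0⟩
  | succ r ihr =>
    intro s hs
    have hmul : (r + 1) * k = r * k + k := by ring
    obtain ⟨t, hts, htk, hpt⟩ := hp s (by omega)
    have hcard : r * k + (k - 1) ≤ (s \ t).card := by
      rw [card_sdiff_of_subset hts, htk]; omega
    obtain ⟨T', hT's, hT'p, hT'd⟩ := ihr (s \ t) hcard
    have hdt : ∀ i, Disjoint t (T' i) :=
      fun i => ((disjoint_sdiff_self_left.mono_left (hT's i)).symm)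
    refine ⟨Fin.cons t T', ?_, ?_, ?_⟩
    · intro j
      refine Fin.cases ?_ ?_ j
      · exact hts
      · intro i; exact (hT's i).trans sdiff_subset
    · intro j
      refine Fin.cases ?_ ?_ j
      · exact ⟨htk, hpt⟩
      · exact hT'p
    · intro j j' hne
      obtain rfl | ⟨i, rfl⟩ := Fin.eq_zero_or_eq_succ j <;>
        obtain rfl | ⟨i', rfl⟩ := Fin.eq_zero_or_eq_succ j'
      · exact absurd rfl hne
      · simpa using hdt i'
      · simpa using (hdt i).symm
      · simpa using hT'd i i' (by simpa [Fin.succ_inj] using hne)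

universe u v

theorem egz_general : ∀ (n : ℕ) (G : Type u) [AddCommGroup G] [Fintype G],
    Fintype.card G = n → ∀ {ι : Type v} [DecidableEq ι] (s : Finset ι) (a : ι → G),
      2 * n - 1 ≤ s.card → ∃ t ⊆ s, t.card = n ∧ ∑ i ∈ t, a i = 0 := by
  intro n
  induction n using Nat.strong_induction_on with
  | _ n ih =>
  intro G _ _ hG ι _ s a hs
  rcases Nat.lt_or_ge n 2 with hn2 | hn2
  · interval_cases n
    · exact absurd hG (by simpa using Fintype.card_pos.ne')
    · have : Subsingleton G := Fintype.card_le_one_iff_subsingleton.mp (by omega)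
      obtain ⟨t, hts, htc⟩ := Finset.exists_subset_card_eq (le_of_eq_of_le rfl hs)
      exact ⟨t, hts, htc, Subsingleton.elim _ _⟩
  · have : Nontrivial G := Fintype.one_lt_card_iff_nontrivial.mp (by omega)
    obtain ⟨g, hg⟩ := exists_ne (0 : G)
    have hm1 : 1 < addOrderOf g := by
      have h0 := addOrderOf_pos g
      have h1 : addOrderOf g ≠ 1 := fun h => hg (AddMonoid.addOrderOf_eq_one_iff.mp h)
      omega
    set m := addOrderOf g with hm
    set H := AddSubgroup.zmultiples g with hH
    letI : Fintype (G ⧸ H) := Fintype.ofFinite _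
    set k := Fintype.card (G ⧸ H) with hk
    have hcard : n = k * m := by
      have h2 := AddSubgroup.card_eq_card_quotient_mul_card_addSubgroup H
      have h3 : Nat.card H = m := Nat.card_zmultiples g
      simp only [Nat.card_eq_fintype_card] at h2 h3
      rw [← hG, h2, h3]
    have hk0 : 0 < k := Fintype.card_pos
    have hkn : k < n := by nlinarith
    have hp : ∀ s' : Finset ι, 2 * k - 1 ≤ s'.card →
        ∃ t ⊆ s', t.card = k ∧ (∑ i ∈ t, a i) ∈ H := by
      intro s' hs'
      obtain ⟨t, hts', htc, htsum⟩ := ih k hkn (G ⧸ H) rfl s'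
        (fun i => QuotientAddGroup.mk (a i)) hs'
      refine ⟨t, hts', htc, ?_⟩
      rw [← QuotientAddGroup.eq_zero_iff]
      rw [← htsum]
      simp
    obtain ⟨T, hTs, hTp, hTd⟩ := extract_disjoint (fun t => (∑ i ∈ t, a i) ∈ H) k hk0 hp
      (2 * m - 1) s (by
        have e1 : (2 * m - 1) * k = 2 * m * k - k := by rw [Nat.sub_mul, one_mul]
        have e3 : 2 * m * k = 2 * n := by rw [hcard]; ring
        have e4 : k ≤ n := le_of_lt hkn
        omega)
    choose c hc using fun j => AddSubgroup.mem_zmultiples_iff.mp (hTp j).2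
    obtain ⟨J, hJu, hJc, hJd⟩ := Int.erdos_ginzburg_ziv (n := m) (s := Finset.univ) c (by simp)
    refine ⟨J.biUnion T, ?_, ?_, ?_⟩
    · exact Finset.biUnion_subset.mpr fun j _ => hTs j
    · rw [Finset.card_biUnion (fun j _ j' _ hne => hTd j j' hne)]
      simp only [(fun j => (hTp j).1)]
      rw [Finset.sum_const, smul_eq_mul, hJc, hcard, mul_comm]
    · rw [Finset.sum_biUnion (fun j hj j' hj' hne => hTd j j' hne)]
      have h5 : ∑ j ∈ J, ∑ i ∈ T j, a i = (∑ j ∈ J, c j) • g := by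
        rw [Finset.sum_smul]; exact Finset.sum_congr rfl fun j _ => (hc j).symm
      rw [h5]
      obtain ⟨d, hd⟩ := hJd
      rw [hd, mul_comm, mul_zsmul, natCast_zsmul, hm, addOrderOf_nsmul_eq_zero, smul_zero]

theorem stmt_6 {G : Type*} [AddCommGroup G] [Fintype G] (n : ℕ)
    (hn : Fintype.card G = n) (x : Fin (2 * n - 1) → G) :
    ∃ I : Finset (Fin (2 * n - 1)), I.card = n ∧ ∑ i ∈ I, x i = 0 := by
  obtain ⟨t, _, htc, hts⟩ := egz_general n G hn Finset.univ x (by simp)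
  exact ⟨t, htc, hts⟩
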